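/- Let H be a connected finite graph with at least one edge, let d, k ≥ 1 be integers and ε > 0 a real. Let G be a finite graph with degree bound d such that: (i) there exists S ⊆ E(G) with |S| ≤ (ε·d/2)·|V(G)| such that every connected component of G∖S has at most k vertices; and (ii) G is ε-far from the property of being H-minor free. Then at least (ε/k)·|V(G)| vertices v of G have the property that B_G(v,k) contains H as a minor. -/

import Mathlib

open scoped Classical

noncomputable section

/-- A finite simple graph, with vertex set `Fin n`. -/
structure FinGraph where
  n : ℕ
  adj : SimpleGraph (Fin n)

namespace FinGraph

/-- `G` has all vertex degrees at most `d`. -/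
def DegreeBound (G : FinGraph) (d : ℕ) : Prop :=
  ∀ v : Fin G.n, (G.adj.neighborSet v).ncard ≤ d

/-- `G` is `(δ,k)`-hyper-finite: one can delete a set `S` of at most `δ·|V(G)|` edges
so that all connected components of the remaining graph have at most `k` vertices. -/
def HyperFinite (G : FinGraph) (δ : ℝ) (k : ℕ) : Prop :=
  ∃ S ⊆ G.adj.edgeSet, (S.ncard : ℝ) ≤ δ * G.n ∧
    ∀ v : Fin G.n, (((G.adj.deleteEdges S).connectedComponentMk v).supp).ncard ≤ k

/-- The ball of radius `r` around `v` in `G`: all vertices at graph distance at most `r`. -/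
def ball (G : FinGraph) (v : Fin G.n) (r : ℕ) : Set (Fin G.n) :=
  {u | ∃ p : G.adj.Walk v u, p.length ≤ r}

lemma mem_ball_self (G : FinGraph) (v : Fin G.n) (r : ℕ) : v ∈ G.ball v r :=
  ⟨SimpleGraph.Walk.nil, by simp⟩

end FinGraph

/-- A rooted finite graph. -/
structure RootedGraph where
  n : ℕ
  adj : SimpleGraph (Fin n)
  root : Fin n

/-- Rooted isomorphism: a graph isomorphism mapping root to root. -/
def RootedGraph.RIso (H K : RootedGraph) : Prop :=
  ∃ φ : H.adj ≃g K.adj, φ H.root = K.root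

instance rootedSetoid : Setoid RootedGraph where
  r := RootedGraph.RIso
  iseqv := by
    constructor
    · intro H; exact ⟨RelIso.refl _, rfl⟩
    · rintro H K ⟨φ, hφ⟩
      refine ⟨φ.symm, ?_⟩
      rw [← hφ]
      exact φ.symm_apply_apply H.root
    · rintro H K L ⟨φ, hφ⟩ ⟨ψ, hψ⟩
      exact ⟨φ.trans ψ, by rw [RelIso.trans_apply, hφ, hψ]⟩

/-- Isomorphism types of rooted finite graphs. -/
def RootedIsoClass := Quotient rootedSetoid

/-- The isomorphism type of the rooted ball `(B_G(v,r), v)`. -/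
noncomputable def FinGraph.ballType (G : FinGraph) (v : Fin G.n) (r : ℕ) : RootedIsoClass :=
  letI : Fintype (G.ball v r) := Fintype.ofFinite _
  let e := Fintype.equivFin (G.ball v r)
  Quotient.mk rootedSetoid
    ⟨Fintype.card (G.ball v r),
     SimpleGraph.comap (⇑e.symm) (G.adj.induce (G.ball v r)),
     e ⟨v, G.mem_ball_self v r⟩⟩

/-- `μ_r^G(H)`: the fraction of vertices of `G` whose rooted `r`-ball has isomorphism type `H`. -/
noncomputable def mu (G : FinGraph) (r : ℕ) (H : RootedIsoClass) : ℝ :=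
  ({v : Fin G.n | G.ballType v r = H}.ncard : ℝ) / G.n

/-- `ρ_r(G,G') = Σ_H |μ_r^G(H) - μ_r^{G'}(H)|`, summed over all isomorphism types of
rooted graphs (only finitely many summands are nonzero). -/
noncomputable def rho (r : ℕ) (G G' : FinGraph) : ℝ :=
  ∑' H : RootedIsoClass, |mu G r H - mu G' r H|

/-- Isomorphism of (unrooted) finite graphs. -/
def FinGraph.Iso (G G' : FinGraph) : Prop := Nonempty (G.adj ≃g G'.adj)

/-- `H` occurs as a subgraph of `G`. -/
def FinGraph.IsSubgraphOf (H G : FinGraph) : Prop :=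
  ∃ f : Fin H.n ↪ Fin G.n, ∀ u v, H.adj.Adj u v → G.adj.Adj (f u) (f v)

/-- `G` is `ε`-far (with respect to degree bound `d`) from the graph property `P`:
every graph on the vertex set of `G` satisfying `P` differs from `G` in at least
`ε·d·|V(G)|` edges. -/
def FarFrom (G : FinGraph) (d : ℕ) (ε : ℝ) (P : Set FinGraph) : Prop :=
  ∀ H : SimpleGraph (Fin G.n), (⟨G.n, H⟩ : FinGraph) ∈ P →
    ε * d * G.n ≤ ((symmDiff G.adj.edgeSet H.edgeSet).ncard : ℝ)

/-- `H` is a minor of `G` (branch-set definition: equivalent, for simple graphs, to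
obtaining `H` from `G` by vertex deletions, edge deletions and edge contractions). -/
def SimpleGraph.HasMinor {V W : Type*} (G : SimpleGraph V) (H : SimpleGraph W) : Prop :=
  ∃ B : W → Set V,
    (∀ u, (G.induce (B u)).Connected) ∧
    (∀ u u', u ≠ u' → Disjoint (B u) (B u')) ∧
    (∀ u u', H.Adj u u' → ∃ x ∈ B u, ∃ y ∈ B u', G.Adj x y)

/-- `H` is a minor of the finite graph `G`. -/
def FinGraph.HasMinor (G H : FinGraph) : Prop := SimpleGraph.HasMinor G.adj H.adj

/-- A graph property (class of graphs) closed under isomorphism. -/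
def IsoClosed (P : Set FinGraph) : Prop :=
  ∀ G G' : FinGraph, FinGraph.Iso G G' → G ∈ P → G' ∈ P

/-- A monotone graph property: closed under taking subgraphs. -/
def MonotoneProp (P : Set FinGraph) : Prop :=
  ∀ G ∈ P, ∀ H : FinGraph, H.IsSubgraphOf G → H ∈ P

/-- A minor-closed graph property. -/
def MinorClosed (P : Set FinGraph) : Prop :=
  ∀ G ∈ P, ∀ H : FinGraph, G.HasMinor H → H ∈ P

/-- A hyper-finite family of graphs. -/
def HyperFiniteFamily (A : Set FinGraph) : Prop :=
  ∀ δ : ℝ, 0 < δ → ∃ k : ℕ, 1 ≤ k ∧ ∀ G ∈ A, G.HyperFinite δ k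

end


section AuxHelpers
open SimpleGraph

lemma aux_reach_of_induce {V : Type*} {G : SimpleGraph V} {s : Set V} {a b : s}
    (h : (G.induce s).Reachable a b) : G.Reachable a b := by
  have := h.map (SimpleGraph.Embedding.comap (Function.Embedding.subtype _) G).toHom
  exact this

lemma aux_branch_reach {V W : Type*} {G : SimpleGraph V} {H : SimpleGraph W}
    (hH : H.Preconnected)
    (B : W → Set V) (hconn : ∀ u, (G.induce (B u)).Connected)
    (hadj : ∀ u u', H.Adj u u' → ∃ x ∈ B u, ∃ y ∈ B u', G.Adj x y) :
    ∀ u u' : W, ∀ a ∈ B u, ∀ b ∈ B u', G.Reachable a b := by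
  have hin : ∀ u, ∀ a ∈ B u, ∀ b ∈ B u, G.Reachable a b := fun u a ha b hb =>
    aux_reach_of_induce ((hconn u).preconnected ⟨a, ha⟩ ⟨b, hb⟩)
  intro u u'
  obtain ⟨p⟩ := hH u u'
  induction p with
  | nil => intro a ha b hb; exact hin _ a ha b hb
  | cons hxy p ih =>
    intro a ha b hb
    obtain ⟨c, hc, e, he, hce⟩ := hadj _ _ hxy
    exact ((hin _ a ha c hc).trans hce.reachable).trans (ih e he b hb)

lemma aux_walk_short {V : Type*} [Finite V] {G : SimpleGraph V} {a b : V}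
    (h : G.Reachable a b) :
    ∃ p : G.Walk a b, p.length + 1 ≤ (G.connectedComponentMk a).supp.ncard := by
  classical
  cases nonempty_fintype V
  obtain ⟨w⟩ := h
  obtain ⟨p, hp⟩ : ∃ p : G.Path a b, True := ⟨w.toPath, trivial⟩
  refine ⟨p.1, ?_⟩
  have hnd : p.1.support.Nodup := p.2.support_nodup
  have hsub : ∀ x ∈ p.1.support, x ∈ (G.connectedComponentMk a).supp := by
    intro x hx
    rw [SimpleGraph.ConnectedComponent.mem_supp_iff, SimpleGraph.ConnectedComponent.eq]
    exact ⟨(p.1.takeUntil x hx).reverse⟩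
  have h1 : p.1.support.length = p.1.length + 1 := SimpleGraph.Walk.length_support _
  have h2 : p.1.support.toFinset.card = p.1.support.length := List.toFinset_card_of_nodup hnd
  have h3 : p.1.support.toFinset ⊆ (G.connectedComponentMk a).supp.toFinset := by
    intro x hx
    rw [Set.mem_toFinset]
    exact hsub x (List.mem_toFinset.mp hx)
  have h4 := Finset.card_le_card h3
  rw [Set.ncard_eq_toFinset_card']
  omega

lemma aux_minor_induce {V W : Type*} {G₀ G₁ : SimpleGraph V} (hle : G₀ ≤ G₁)
    {H : SimpleGraph W} (T : Set V) (B : W → Set V)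
    (h1 : ∀ u, (G₀.induce (B u)).Connected)
    (h2 : ∀ u u', u ≠ u' → Disjoint (B u) (B u'))
    (h3 : ∀ u u', H.Adj u u' → ∃ x ∈ B u, ∃ y ∈ B u', G₀.Adj x y)
    (hT : ∀ u, B u ⊆ T) :
    (G₁.induce T).HasMinor H := by
  refine ⟨fun u => {x : T | x.1 ∈ B u}, ?_, ?_, ?_⟩
  · intro u
    refine SimpleGraph.Connected.map
      ⟨fun x => ⟨⟨x.1, hT u x.2⟩, x.2⟩, fun hxy => hle hxy⟩ ?_ (h1 u)
    rintro ⟨⟨x, hxT⟩, hxB⟩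
    exact ⟨⟨x, hxB⟩, rfl⟩
  · intro u u' h
    rw [Set.disjoint_left]
    intro x hx hx'
    exact Set.disjoint_left.mp (h2 u u' h) hx hx'
  · intro u u' h
    obtain ⟨x, hx, y, hy, hxy⟩ := h3 u u' h
    exact ⟨⟨x, hT u hx⟩, hx, ⟨y, hT u' hy⟩, hy, hle hxy⟩

lemma aux_edge_count {n d : ℕ} {G : SimpleGraph (Fin n)}
    (hdeg : ∀ v, (G.neighborSet v).ncard ≤ d) (W : Set (Fin n)) :
    ({e ∈ G.edgeSet | ∀ x ∈ e, x ∈ W}.ncard : ℝ) * 2 ≤ (d : ℝ) * W.ncard := by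
  classical
  have key : {e ∈ G.edgeSet | ∀ x ∈ e, x ∈ W}.ncard * 2 ≤ d * W.ncard := by
    set GW := G.induce W with hGW
    have himg : {e ∈ G.edgeSet | ∀ x ∈ e, x ∈ W} = Sym2.map (Subtype.val) '' GW.edgeSet := by
      ext e
      constructor
      · intro he
        induction e with
        | _ a b =>
          obtain ⟨hadj, hmem⟩ := he
          have ha : a ∈ W := hmem a (Sym2.mem_mk_left a b)
          have hb : b ∈ W := hmem b (Sym2.mem_mk_right a b)
          exact ⟨s(⟨a, ha⟩, ⟨b, hb⟩), hadj, rfl⟩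
      · rintro ⟨e', he', rfl⟩
        induction e' with
        | _ x y =>
          refine ⟨he', ?_⟩
          intro z hz
          rw [Sym2.map_pair_eq, Sym2.mem_iff] at hz
          rcases hz with rfl | rfl
          · exact x.2
          · exact y.2
    have hdegW : ∀ v : W, GW.degree v ≤ d := by
      intro v
      have hsub : Subtype.val '' (GW.neighborSet v) ⊆ G.neighborSet v.1 := by
        rintro _ ⟨w, hw, rfl⟩; exact hw
      have h1 : (GW.neighborSet v).ncard ≤ (G.neighborSet v.1).ncard := by
        calc (GW.neighborSet v).ncard
            = (Subtype.val '' GW.neighborSet v).ncard :=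
              (Set.ncard_image_of_injective _ Subtype.val_injective).symm
          _ ≤ _ := Set.ncard_le_ncard hsub (Set.toFinite _)
      have h2 : (GW.neighborSet v).ncard = GW.degree v := by
        rw [Set.ncard_eq_toFinset_card']; rfl
      exact h2 ▸ le_trans h1 (hdeg v.1)
    have hsum : ∑ v : W, GW.degree v = 2 * GW.edgeFinset.card :=
      SimpleGraph.sum_degrees_eq_twice_card_edges GW
    have hsum2 : ∑ v : W, GW.degree v ≤ Fintype.card W * d := by
      calc ∑ v : W, GW.degree v ≤ ∑ _v : W, d := Finset.sum_le_sum (fun v _ => hdegW v)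
        _ = Fintype.card W * d := by simp [Finset.sum_const, Finset.card_univ, mul_comm]
    have hcard1 : {e ∈ G.edgeSet | ∀ x ∈ e, x ∈ W}.ncard = GW.edgeFinset.card := by
      rw [himg, Set.ncard_image_of_injective _ (Sym2.map.injective Subtype.val_injective),
        Set.ncard_eq_toFinset_card']
      congr 1
    have hcard2 : Fintype.card W = W.ncard := by
      rw [Set.ncard_eq_toFinset_card', Set.toFinset_card]
    rw [hcard1]
    rw [hcard2] at hsum2
    linarith
  exact_mod_cast key

end AuxHelpers

/-- Let `H` be a connected graph with at least one edge, and let `G` have degree bound `d`.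
If (i) some `S ⊆ E(G)` with `|S| ≤ (ε·d/2)·|V(G)|` cuts `G` into components of at most `k`
vertices, and (ii) `G` is `ε`-far from being `H`-minor free, then at least `(ε/k)·|V(G)|`
vertices `v` of `G` are such that `B_G(v,k)` contains `H` as a minor. -/
theorem many_balls_contain_minor (H : FinGraph) (hHconn : H.adj.Connected)
    (hHedge : ∃ x y : Fin H.n, H.adj.Adj x y)
    (d k : ℕ) (hd : 1 ≤ d) (hk : 1 ≤ k) (ε : ℝ) (hε : 0 < ε)
    (G : FinGraph) (hdeg : G.DegreeBound d)
    (hcut : ∃ S ⊆ G.adj.edgeSet, (S.ncard : ℝ) ≤ (ε * d / 2) * G.n ∧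
      ∀ v : Fin G.n, (((G.adj.deleteEdges S).connectedComponentMk v).supp).ncard ≤ k)
    (hfar : FarFrom G d ε {G' : FinGraph | ¬ G'.HasMinor H}) :
    (ε / k) * G.n ≤
      ({v : Fin G.n |
        SimpleGraph.HasMinor (G.adj.induce (G.ball v k)) H.adj}.ncard : ℝ) := by
  classical
  obtain ⟨S, hSsub, hScard, hScomp⟩ := hcut
  set W := {v : Fin G.n | SimpleGraph.HasMinor (G.adj.induce (G.ball v k)) H.adj} with hWdef
  by_contra hcon
  push_neg at hcon
  have hd1 : (1:ℝ) ≤ d := by exact_mod_cast hd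
  have hk1 : (1:ℝ) ≤ k := by exact_mod_cast hk
  set EW := {e ∈ G.adj.edgeSet | ∀ x ∈ e, x ∈ W} with hEWdef
  have hEW2 : (EW.ncard : ℝ) * 2 ≤ (d:ℝ) * W.ncard := aux_edge_count hdeg W
  set D := S ∪ EW with hDdef
  have hDsub : D ⊆ G.adj.edgeSet := Set.union_subset hSsub (fun e he => he.1)
  have hDcard : (D.ncard : ℝ) < ε * d * G.n := by
    have h1 : (D.ncard : ℝ) ≤ (S.ncard : ℝ) + (EW.ncard : ℝ) := by
      exact_mod_cast Set.ncard_union_le S EW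
    have hn0 : (0:ℝ) ≤ G.n := Nat.cast_nonneg _
    have hWlt : (W.ncard : ℝ) < ε / k * G.n := hcon
    have hek : ε / k * G.n ≤ ε * G.n :=
      mul_le_mul_of_nonneg_right (div_le_self hε.le hk1) hn0
    nlinarith
  set G2 := G.adj.deleteEdges D with hG2def
  have hminor : SimpleGraph.HasMinor G2 H.adj := by
    by_contra hno
    have hfar2 := hfar G2 hno
    have hsd : symmDiff G.adj.edgeSet G2.edgeSet = D := by
      rw [hG2def, SimpleGraph.edgeSet_deleteEdges]
      ext e
      simp only [Set.mem_symmDiff, Set.mem_diff]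
      constructor
      · rintro (⟨he, hne⟩ | ⟨⟨he, hnD⟩, hne⟩)
        · by_contra hD
          exact hne ⟨he, hD⟩
        · exact absurd he hne
      · intro heD
        exact Or.inl ⟨hDsub heD, fun h => h.2 heD⟩
    rw [hsd] at hfar2
    linarith
  obtain ⟨B, hBconn, hBdisj, hBadj⟩ := hminor
  obtain ⟨x, y, hxy⟩ := hHedge
  obtain ⟨a, ha, b, hb, hab⟩ := hBadj x y hxy
  set GS := G.adj.deleteEdges S with hGSdef
  have hle2 : G2 ≤ GS := by
    intro u v huv
    rw [hG2def, SimpleGraph.deleteEdges_adj] at huv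
    rw [hGSdef, SimpleGraph.deleteEdges_adj]
    exact ⟨huv.1, fun hs => huv.2 (Or.inl hs)⟩
  have hleG : G2 ≤ G.adj := SimpleGraph.deleteEdges_le D
  have hreach := aux_branch_reach hHconn.preconnected B hBconn hBadj
  set C := (GS.connectedComponentMk a).supp with hCdef
  have hBC : ∀ u, B u ⊆ C := by
    intro u c hc
    rw [hCdef, SimpleGraph.ConnectedComponent.mem_supp_iff]
    exact SimpleGraph.ConnectedComponent.sound ((hreach u x c hc a ha).mono hle2)
  have hballmem : ∀ w ∈ C, ∀ c ∈ C, c ∈ G.ball w k := by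
    intro w hw c hc
    rw [hCdef, SimpleGraph.ConnectedComponent.mem_supp_iff] at hw hc
    have hwr : GS.Reachable w c :=
      SimpleGraph.ConnectedComponent.eq.mp (hw.trans hc.symm)
    obtain ⟨p, hp⟩ := aux_walk_short hwr
    have hsupp : ((GS.connectedComponentMk w).supp).ncard ≤ k := hScomp w
    refine ⟨p.mapLe (SimpleGraph.deleteEdges_le S), ?_⟩
    simp only [SimpleGraph.Walk.length_map]
    omega
  have hCW : ∀ w ∈ C, w ∈ W := by
    intro w hw
    exact aux_minor_induce hleG (G.ball w k) B hBconn hBdisj hBadj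
      (fun u c hc => hballmem w hw c (hBC u hc))
  have habG : G.adj.Adj a b := hleG hab
  have haC : a ∈ C := hBC x ha
  have hbC : b ∈ C := hBC y hb
  have hmemEW : s(a,b) ∈ EW := by
    refine ⟨habG, ?_⟩
    intro z hz
    rw [Sym2.mem_iff] at hz
    rcases hz with rfl | rfl
    · exact hCW _ haC
    · exact hCW _ hbC
  rw [hG2def, SimpleGraph.deleteEdges_adj] at hab
  exact hab.2 (Or.inr hmemEW)
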